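/- arXiv:2312.08081 — 2 statements merged into one kernel-verified Lean document; each statement's English description precedes it below -/
import Mathlib

section
/- Let t : Z^d → ℝ be a nonnegative subsolution of (H_V - λ)ψ = 0 in Z^d_{≥N} with t_n = 0 whenever N-1 ≤ |n| < N+1, and let ξ : Z^d → ℝ be finitely supported. Then Σ_{|n|≥N} Σ_{j=1}^d [D_j(ξt)]_n² + Σ_{|n|≥N} (V_n - λ) ξ_n² t_n² ≤ Σ_{|n|≥N} Σ_{j=1}^d t_n t_{n-δ_j} (D_j ξ)_n². -/
open scoped BigOperators

noncomputable section

/-- Euclidean norm of a lattice point in `ℤ^d`. -/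
def znorm {d : ℕ} (v : Fin d → ℤ) : ℝ := Real.sqrt (∑ j, ((v j : ℝ))^2)

/-- The discrete Laplacian `(-Δψ)_n = Σ_{|m-n|=1} (ψ_n - ψ_m)`. -/
def negLap {d : ℕ} (ψ : (Fin d → ℤ) → ℝ) (n : Fin d → ℤ) : ℝ :=
  ∑ᶠ (m : Fin d → ℤ) (_ : znorm (m - n) = 1), (ψ n - ψ m)

/-- The partial difference operator `(D_j ψ)_n = ψ_n - ψ_{n-δ_j}`. -/
def Dop {d : ℕ} (j : Fin d) (ψ : (Fin d → ℤ) → ℝ) (n : Fin d → ℤ) : ℝ :=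
  ψ n - ψ (n - Pi.single j 1)


lemma conv_helper {α : Type*} (P : α → Prop) (f g : α → ℝ) (F : Finset α)
    (h1 : ∀ a, P a → f a = g a) (h2 : ∀ a, ¬ P a → g a = 0)
    (h3 : Function.support g ⊆ ↑F) :
    (∑ᶠ (a) (_ : P a), f a) = ∑ a ∈ F, g a := by
  classical
  have e1 : (∑ᶠ (a) (_ : P a), f a) = ∑ᶠ a, Set.indicator {x | P x} f a :=
    finsum_mem_def {x | P x} f
  have e2 : Set.indicator {x | P x} f = g := by
    funext a
    by_cases hp : P a
    · simp only [Set.indicator_apply, Set.mem_setOf_eq, if_pos hp]; exact h1 a hp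
    · simp only [Set.indicator_apply, Set.mem_setOf_eq, if_neg hp]; exact (h2 a hp).symm
  rw [e1, e2, finsum_eq_finset_sum_of_support_subset g h3]

variable {d : ℕ}

lemma znorm_eq_norm (v : Fin d → ℤ) :
    znorm v = ‖(show EuclideanSpace ℝ (Fin d) from WithLp.toLp 2 (fun j => (v j : ℝ)))‖ := by
  rw [EuclideanSpace.norm_eq]
  simp [znorm, Real.norm_eq_abs, sq_abs]

lemma znorm_single (j : Fin d) : znorm (Pi.single j 1 : Fin d → ℤ) = 1 := by
  have h : ∑ k : Fin d, (((Pi.single j 1 : Fin d → ℤ) k : ℝ))^2 = 1 := by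
    rw [Finset.sum_eq_single_of_mem j (Finset.mem_univ j)]
    · simp
    · intro k _ hk; rw [Pi.single_eq_of_ne hk]; norm_num
  simp [znorm, h]

lemma znorm_neg (v : Fin d → ℤ) : znorm (-v) = znorm v := by
  unfold znorm
  congr 1
  apply Finset.sum_congr rfl
  intro k _
  rw [Pi.neg_apply]
  push_cast
  ring

lemma znorm_tri (a b : Fin d → ℤ) : znorm a ≤ znorm b + znorm (a - b) := by
  rw [znorm_eq_norm, znorm_eq_norm, znorm_eq_norm]
  have h : (show EuclideanSpace ℝ (Fin d) from WithLp.toLp 2 (fun j => (a j : ℝ)))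
      = (show EuclideanSpace ℝ (Fin d) from WithLp.toLp 2 (fun j => (b j : ℝ)))
        + (show EuclideanSpace ℝ (Fin d) from WithLp.toLp 2 (fun j => ((a - b) j : ℝ))) := by
    ext j
    show (a j : ℝ) = (b j : ℝ) + ((a j - b j : ℤ) : ℝ)
    push_cast; ring
  rw [h]
  exact norm_add_le _ _

lemma znorm_eq_one_iff (v : Fin d → ℤ) :
    znorm v = 1 ↔ ∃ j : Fin d, v = Pi.single j 1 ∨ v = -Pi.single j 1 := by
  constructor
  · intro h
    have h0 : ∑ k : Fin d, ((v k : ℝ))^2 = 1 := by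
      have := congrArg (fun x => x ^ 2) h
      simpa [znorm, Real.sq_sqrt (Finset.sum_nonneg fun k _ => sq_nonneg _)] using this
    have hZ : ∑ k : Fin d, (v k)^2 = 1 := by exact_mod_cast h0
    obtain ⟨j, hj⟩ : ∃ j, v j ≠ 0 := by
      by_contra hc
      push_neg at hc
      simp [hc] at hZ
    have h1 : 1 ≤ (v j)^2 := by
      have := Int.one_le_abs hj
      nlinarith [sq_abs (v j)]
    have hsplit : (v j)^2 + ∑ k ∈ Finset.univ.erase j, (v k)^2 = 1 := by
      have h' := Finset.add_sum_erase Finset.univ (fun k => (v k)^2) (Finset.mem_univ j)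
      rw [h']; exact hZ
    have hnn : 0 ≤ ∑ k ∈ Finset.univ.erase j, (v k)^2 :=
      Finset.sum_nonneg fun k _ => sq_nonneg _
    have hrest : ∑ k ∈ Finset.univ.erase j, (v k)^2 = 0 := by linarith
    have hvj : (v j)^2 = 1 := by linarith
    have hzero : ∀ k, k ≠ j → v k = 0 := by
      intro k hk
      have := (Finset.sum_eq_zero_iff_of_nonneg fun k _ => sq_nonneg (v k)).1 hrest k
        (Finset.mem_erase.2 ⟨hk, Finset.mem_univ k⟩)
      exact sq_eq_zero_iff.mp this
    have hone : v j = 1 ∨ v j = -1 := by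
      refine Int.isUnit_iff.mp (IsUnit.of_mul_eq_one (v j) ?_)
      rw [← sq]; exact hvj
    refine ⟨j, ?_⟩
    rcases hone with h1' | h1'
    · left
      funext k
      by_cases hk : k = j
      · subst hk; rw [Pi.single_eq_same]; exact h1'
      · rw [Pi.single_eq_of_ne hk]; exact hzero k hk
    · right
      funext k
      by_cases hk : k = j
      · subst hk; rw [Pi.neg_apply, Pi.single_eq_same]; exact h1'
      · rw [Pi.neg_apply, Pi.single_eq_of_ne hk, neg_zero]; exact hzero k hk
  · rintro ⟨j, h | h⟩
    · rw [h]; exact znorm_single j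
    · rw [h, znorm_neg]; exact znorm_single j


lemma single_injective (n : Fin d → ℤ) :
    ∀ j k : Fin d, n + Pi.single j 1 = n + Pi.single k 1 → j = k := by
  intro j k h
  by_contra hk
  have := congrFun h j
  simp only [Pi.add_apply, Pi.single_eq_same, Pi.single_eq_of_ne hk] at this
  omega

lemma single_injective' (n : Fin d → ℤ) :
    ∀ j k : Fin d, n - Pi.single j 1 = n - Pi.single k 1 → j = k := by
  intro j k h
  by_contra hk
  have := congrFun h j
  simp only [Pi.sub_apply, Pi.single_eq_same, Pi.single_eq_of_ne hk] at this
  omega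

lemma neighbor_set (n : Fin d → ℤ) :
    {m : Fin d → ℤ | znorm (m - n) = 1}
      = ↑((Finset.univ.image fun j : Fin d => n + Pi.single j 1)
          ∪ (Finset.univ.image fun j : Fin d => n - Pi.single j 1)) := by
  ext m
  simp only [Set.mem_setOf_eq, Finset.coe_union, Set.mem_union, Finset.coe_image,
    Set.mem_image, Finset.mem_coe, Finset.coe_univ, Set.mem_univ, true_and,
    znorm_eq_one_iff]
  constructor
  · rintro ⟨j, h | h⟩
    · exact Or.inl ⟨j, by rw [← h]; abel⟩
    · refine Or.inr ⟨j, ?_⟩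
      have h' : m = -Pi.single j 1 + n := by
        rw [← h]; abel
      rw [h']; abel
  · rintro (⟨j, rfl⟩ | ⟨j, rfl⟩)
    · exact ⟨j, Or.inl (by abel)⟩
    · exact ⟨j, Or.inr (by abel)⟩

lemma negLap_eq (ψ : (Fin d → ℤ) → ℝ) (n : Fin d → ℤ) :
    negLap ψ n = ∑ j : Fin d,
      ((ψ n - ψ (n + Pi.single j 1)) + (ψ n - ψ (n - Pi.single j 1))) := by
  classical
  set F1 : Finset (Fin d → ℤ) := Finset.univ.image fun j : Fin d => n + Pi.single j 1 with hF1
  set F2 : Finset (Fin d → ℤ) := Finset.univ.image fun j : Fin d => n - Pi.single j 1 with hF2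
  have hmem : ∀ m : Fin d → ℤ, m ∈ F1 ∪ F2 ↔ znorm (m - n) = 1 := by
    intro m
    have := neighbor_set n
    constructor
    · intro hm
      have : m ∈ {m : Fin d → ℤ | znorm (m - n) = 1} := by
        rw [neighbor_set n]; exact_mod_cast hm
      exact this
    · intro hm
      have h2 : m ∈ {m : Fin d → ℤ | znorm (m - n) = 1} := hm
      rw [neighbor_set n] at h2
      exact_mod_cast h2
  have e1 : negLap ψ n
      = ∑ m ∈ F1 ∪ F2, (if znorm (m - n) = 1 then ψ n - ψ m else 0) := by
    refine conv_helper (fun m => znorm (m - n) = 1) _ _ _ ?_ ?_ ?_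
    · intro m hm; rw [if_pos hm]
    · intro m hm; rw [if_neg hm]
    · intro m hm
      rw [Function.mem_support] at hm
      by_cases h : znorm (m - n) = 1
      · exact Finset.mem_coe.mpr ((hmem m).mpr h)
      · exact absurd (if_neg h) hm
  rw [e1]
  have e2 : ∑ m ∈ F1 ∪ F2, (if znorm (m - n) = 1 then ψ n - ψ m else 0)
      = ∑ m ∈ F1 ∪ F2, (ψ n - ψ m) := by
    refine Finset.sum_congr rfl fun m hm => if_pos ((hmem m).mp hm)
  rw [e2]
  have hdisj : Disjoint F1 F2 := by
    rw [Finset.disjoint_left]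
    rintro m hm1 hm2
    rw [hF1, Finset.mem_image] at hm1
    rw [hF2, Finset.mem_image] at hm2
    obtain ⟨j, -, hj⟩ := hm1
    obtain ⟨k, -, hk⟩ := hm2
    have h := hj.trans hk.symm
    have := congrFun h j
    by_cases hkj : j = k
    · subst hkj
      simp only [Pi.add_apply, Pi.sub_apply, Pi.single_eq_same] at this
      omega
    · simp only [Pi.add_apply, Pi.sub_apply, Pi.single_eq_same,
        Pi.single_eq_of_ne (Ne.symm (by exact fun h' => hkj h'.symm) : j ≠ k)] at this
      omega
  rw [Finset.sum_union hdisj, hF1, hF2,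
    Finset.sum_image (fun j _ k _ h => single_injective n j k h),
    Finset.sum_image (fun j _ k _ h => single_injective' n j k h),
    ← Finset.sum_add_distrib]



/-- Inequality derived from a nonnegative subsolution `t` of `(H_V - λ)ψ = 0` in
`ℤ^d_{≥N}` vanishing in the annulus `N-1 ≤ |n| < N+1`:
`Σ_{|n|≥N} Σ_j [D_j(ξt)]_n² + Σ_{|n|≥N} (V_n - λ) ξ_n² t_n²
  ≤ Σ_{|n|≥N} Σ_j t_n t_{n-δ_j} (D_j ξ)_n²`. -/
theorem subsolution_inequality {d : ℕ} (N : ℕ) (V : (Fin d → ℤ) → ℝ) (lam : ℝ)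
    (t ξ : (Fin d → ℤ) → ℝ)
    (ht_nonneg : ∀ n, 0 ≤ t n)
    (ht_sub : ∀ n : Fin d → ℤ, (N : ℝ) ≤ znorm n →
      negLap t n + (V n - lam) * t n ≤ 0)
    (ht_van : ∀ n : Fin d → ℤ, (N : ℝ) - 1 ≤ znorm n → znorm n < (N : ℝ) + 1 → t n = 0)
    (hξ : (Function.support ξ).Finite) :
    (∑ᶠ (n : Fin d → ℤ) (_ : (N : ℝ) ≤ znorm n),
        ∑ j : Fin d, (Dop j (fun m => ξ m * t m) n) ^ 2)
      + (∑ᶠ (n : Fin d → ℤ) (_ : (N : ℝ) ≤ znorm n), (V n - lam) * ξ n ^ 2 * t n ^ 2)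
    ≤ ∑ᶠ (n : Fin d → ℤ) (_ : (N : ℝ) ≤ znorm n),
        ∑ j : Fin d, t n * t (n - Pi.single j 1) * (Dop j ξ n) ^ 2 := by
  classical
  set T : (Fin d → ℤ) → ℝ := fun n => if (N : ℝ) ≤ znorm n then t n else 0 with hT
  have hT_pos : ∀ n, (N : ℝ) ≤ znorm n → T n = t n := by
    intro n h; simp only [hT]; exact if_pos h
  have hT_neg : ∀ n, ¬ (N : ℝ) ≤ znorm n → T n = 0 := by
    intro n h; simp only [hT]; exact if_neg h
  have hnbd : ∀ n m : Fin d → ℤ, znorm (m - n) = 1 →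
      znorm m ≤ znorm n + 1 ∧ znorm n ≤ znorm m + 1 := by
    intro n m h
    have h1 := znorm_tri m n
    have h2 := znorm_tri n m
    have e : n - m = -(m - n) := by abel
    rw [h] at h1
    rw [e, znorm_neg, h] at h2
    exact ⟨h1, h2⟩
  have key1 : ∀ n m : Fin d → ℤ, znorm (m - n) = 1 → (N : ℝ) ≤ znorm n → T m = t m := by
    intro n m h hn
    by_cases hm : (N : ℝ) ≤ znorm m
    · exact hT_pos m hm
    · push_neg at hm
      rw [hT_neg m (not_le.mpr hm)]
      exact (ht_van m (by linarith [(hnbd n m h).2]) (by linarith)).symm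
  have key2 : ∀ n m : Fin d → ℤ, znorm (m - n) = 1 → ¬ (N : ℝ) ≤ znorm n → T m = 0 := by
    intro n m h hn
    by_cases hm : (N : ℝ) ≤ znorm m
    · push_neg at hn
      rw [hT_pos m hm]
      exact ht_van m (by linarith) (by linarith [(hnbd n m h).1])
    · exact hT_neg m hm
  have hdist_sub : ∀ (n : Fin d → ℤ) (j : Fin d), znorm ((n - Pi.single j 1) - n) = 1 := by
    intro n j
    have e : (n - Pi.single j 1) - n = -Pi.single j 1 := by abel
    rw [e, znorm_neg]; exact znorm_single j
  have hdist_add : ∀ (n : Fin d → ℤ) (j : Fin d), znorm ((n + Pi.single j 1) - n) = 1 := by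
    intro n j
    have e : (n + Pi.single j 1) - n = Pi.single j 1 := by abel
    rw [e]; exact znorm_single j
  have hKfin : (Function.support ξ
      ∪ ⋃ j : Fin d, (fun x => x + Pi.single j 1) '' Function.support ξ).Finite :=
    hξ.union (Set.finite_iUnion fun j => hξ.image _)
  set F : Finset (Fin d → ℤ) := hKfin.toFinset with hFdef
  have hmemF : ∀ n : Fin d → ℤ, (ξ n ≠ 0 ∨ ∃ j, ξ (n - Pi.single j 1) ≠ 0) → n ∈ F := by
    intro n hn
    rw [hFdef, Set.Finite.mem_toFinset]
    rcases hn with h | ⟨j, h⟩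
    · exact Or.inl h
    · exact Or.inr (Set.mem_iUnion.mpr ⟨j, ⟨n - Pi.single j 1, h,
        show (n - Pi.single j 1) + Pi.single j 1 = n by abel⟩⟩)
  have hFout : ∀ n : Fin d → ℤ, n ∉ F → ξ n = 0 ∧ ∀ j, ξ (n - Pi.single j 1) = 0 := by
    intro n hn
    constructor
    · by_contra h; exact hn (hmemF n (Or.inl h))
    · intro j; by_contra h; exact hn (hmemF n (Or.inr ⟨j, h⟩))
  have conv1 : (∑ᶠ (n : Fin d → ℤ) (_ : (N : ℝ) ≤ znorm n),
        ∑ j : Fin d, (Dop j (fun m => ξ m * t m) n) ^ 2)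
      = ∑ n ∈ F, ∑ j : Fin d, (Dop j (fun m => ξ m * T m) n) ^ 2 := by
    refine conv_helper _ _ _ _ ?_ ?_ ?_
    · intro n hn
      refine Finset.sum_congr rfl fun j _ => ?_
      have e1 : T n = t n := hT_pos n hn
      have e2 : T (n - Pi.single j 1) = t (n - Pi.single j 1) :=
        key1 n _ (hdist_sub n j) hn
      simp only [Dop, e1, e2]
    · intro n hn
      refine Finset.sum_eq_zero fun j _ => ?_
      have e1 : T n = 0 := hT_neg n hn
      have e2 : T (n - Pi.single j 1) = 0 := key2 n _ (hdist_sub n j) hn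
      simp [Dop, e1, e2]
    · intro n hn
      rw [Function.mem_support] at hn
      by_contra hnF
      obtain ⟨h0, h0'⟩ := hFout n hnF
      exact hn (Finset.sum_eq_zero fun j _ => by simp [Dop, h0, h0' j])
  have conv2 : (∑ᶠ (n : Fin d → ℤ) (_ : (N : ℝ) ≤ znorm n),
        (V n - lam) * ξ n ^ 2 * t n ^ 2)
      = ∑ n ∈ F, (V n - lam) * ξ n ^ 2 * T n ^ 2 := by
    refine conv_helper _ _ _ _ ?_ ?_ ?_
    · intro n hn; rw [hT_pos n hn]
    · intro n hn; rw [hT_neg n hn]; ring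
    · intro n hn
      rw [Function.mem_support] at hn
      by_contra hnF
      exact hn (by simp [(hFout n hnF).1])
  have conv3 : (∑ᶠ (n : Fin d → ℤ) (_ : (N : ℝ) ≤ znorm n),
        ∑ j : Fin d, t n * t (n - Pi.single j 1) * (Dop j ξ n) ^ 2)
      = ∑ n ∈ F, ∑ j : Fin d, T n * T (n - Pi.single j 1) * (Dop j ξ n) ^ 2 := by
    refine conv_helper _ _ _ _ ?_ ?_ ?_
    · intro n hn
      refine Finset.sum_congr rfl fun j _ => ?_
      rw [hT_pos n hn, key1 n _ (hdist_sub n j) hn]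
    · intro n hn
      refine Finset.sum_eq_zero fun j _ => ?_
      rw [hT_neg n hn]; ring
    · intro n hn
      rw [Function.mem_support] at hn
      by_contra hnF
      obtain ⟨h0, h0'⟩ := hFout n hnF
      exact hn (Finset.sum_eq_zero fun j _ => by simp [Dop, h0, h0' j])
  have hpt : ∀ n, (∑ j : Fin d, (Dop j (fun m => ξ m * T m) n) ^ 2)
      = (∑ j : Fin d, Dop j T n * Dop j (fun m => ξ m ^ 2 * T m) n)
        + ∑ j : Fin d, T n * T (n - Pi.single j 1) * (Dop j ξ n) ^ 2 := by
    intro n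
    rw [← Finset.sum_add_distrib]
    refine Finset.sum_congr rfl fun j _ => ?_
    simp only [Dop]
    ring
  have hsplit : ∑ n ∈ F, ∑ j : Fin d, (Dop j (fun m => ξ m * T m) n) ^ 2
      = (∑ n ∈ F, ∑ j : Fin d, Dop j T n * Dop j (fun m => ξ m ^ 2 * T m) n)
        + ∑ n ∈ F, ∑ j : Fin d, T n * T (n - Pi.single j 1) * (Dop j ξ n) ^ 2 := by
    rw [← Finset.sum_add_distrib]
    exact Finset.sum_congr rfl fun n _ => hpt n
  have hshift : ∀ j : Fin d,
      (∑ n ∈ F, (T n - T (n - Pi.single j 1))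
        * (ξ (n - Pi.single j 1) ^ 2 * T (n - Pi.single j 1)))
      = ∑ n ∈ F, (T (n + Pi.single j 1) - T n) * (ξ n ^ 2 * T n) := by
    intro j
    have hs1 : Function.support (fun n => (T n - T (n - Pi.single j 1))
        * (ξ (n - Pi.single j 1) ^ 2 * T (n - Pi.single j 1))) ⊆ ↑F := by
      intro n hn
      rw [Function.mem_support] at hn
      refine Finset.mem_coe.mpr (hmemF n (Or.inr ⟨j, fun h => hn ?_⟩))
      simp [h]
    have hs2 : Function.support (fun n => (T (n + Pi.single j 1) - T n)
        * (ξ n ^ 2 * T n)) ⊆ ↑F := by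
      intro n hn
      rw [Function.mem_support] at hn
      refine Finset.mem_coe.mpr (hmemF n (Or.inl fun h => hn ?_))
      simp [h]
    rw [← finsum_eq_finset_sum_of_support_subset _ hs1,
      ← finsum_eq_finset_sum_of_support_subset _ hs2]
    have hcomp := finsum_comp_equiv (Equiv.subRight (Pi.single j 1 : Fin d → ℤ))
      (f := fun n => (T (n + Pi.single j 1) - T n) * (ξ n ^ 2 * T n))
    rw [← hcomp]
    apply finsum_congr
    intro n
    simp only [Equiv.subRight_apply]
    rw [show n - Pi.single j 1 + Pi.single j 1 = n from by abel]
  have hparts : ∑ n ∈ F, ∑ j : Fin d, Dop j T n * Dop j (fun m => ξ m ^ 2 * T m) n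
      = ∑ n ∈ F, (ξ n ^ 2 * T n) * negLap T n := by
    rw [Finset.sum_comm]
    have hper : ∀ j : Fin d, ∑ n ∈ F, Dop j T n * Dop j (fun m => ξ m ^ 2 * T m) n
        = ∑ n ∈ F, ((T n - T (n - Pi.single j 1)) - (T (n + Pi.single j 1) - T n))
            * (ξ n ^ 2 * T n) := by
      intro j
      have e : ∀ n, Dop j T n * Dop j (fun m => ξ m ^ 2 * T m) n
          = (T n - T (n - Pi.single j 1)) * (ξ n ^ 2 * T n)
            - (T n - T (n - Pi.single j 1))
              * (ξ (n - Pi.single j 1) ^ 2 * T (n - Pi.single j 1)) := by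
        intro n; simp only [Dop]; ring
      calc ∑ n ∈ F, Dop j T n * Dop j (fun m => ξ m ^ 2 * T m) n
          = ∑ n ∈ F, ((T n - T (n - Pi.single j 1)) * (ξ n ^ 2 * T n))
            - ∑ n ∈ F, ((T n - T (n - Pi.single j 1))
              * (ξ (n - Pi.single j 1) ^ 2 * T (n - Pi.single j 1))) := by
            rw [← Finset.sum_sub_distrib]
            exact Finset.sum_congr rfl fun n _ => e n
        _ = ∑ n ∈ F, ((T n - T (n - Pi.single j 1)) * (ξ n ^ 2 * T n))
            - ∑ n ∈ F, ((T (n + Pi.single j 1) - T n) * (ξ n ^ 2 * T n)) := by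
            rw [hshift j]
        _ = ∑ n ∈ F, ((T n - T (n - Pi.single j 1)) - (T (n + Pi.single j 1) - T n))
            * (ξ n ^ 2 * T n) := by
            rw [← Finset.sum_sub_distrib]
            exact Finset.sum_congr rfl fun n _ => by ring
    calc ∑ j : Fin d, ∑ n ∈ F, Dop j T n * Dop j (fun m => ξ m ^ 2 * T m) n
        = ∑ j : Fin d, ∑ n ∈ F,
            ((T n - T (n - Pi.single j 1)) - (T (n + Pi.single j 1) - T n))
              * (ξ n ^ 2 * T n) := Finset.sum_congr rfl fun j _ => hper j
      _ = ∑ n ∈ F, ∑ j : Fin d,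
            ((T n - T (n - Pi.single j 1)) - (T (n + Pi.single j 1) - T n))
              * (ξ n ^ 2 * T n) := Finset.sum_comm
      _ = ∑ n ∈ F, (ξ n ^ 2 * T n) * negLap T n := by
          refine Finset.sum_congr rfl fun n _ => ?_
          rw [negLap_eq T n, Finset.mul_sum]
          refine Finset.sum_congr rfl fun j _ => ?_
          ring
  rw [conv1, conv2, conv3, hsplit, hparts]
  have hfin : ∑ n ∈ F, ((ξ n ^ 2 * T n) * negLap T n)
      + ∑ n ∈ F, (V n - lam) * ξ n ^ 2 * T n ^ 2 ≤ 0 := by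
    rw [← Finset.sum_add_distrib]
    refine Finset.sum_nonpos fun n _ => ?_
    by_cases hn : (N : ℝ) ≤ znorm n
    · have hTn : T n = t n := hT_pos n hn
      have hlap : negLap T n = negLap t n := by
        rw [negLap_eq, negLap_eq]
        refine Finset.sum_congr rfl fun j _ => ?_
        rw [hTn, key1 n _ (hdist_add n j) hn, key1 n _ (hdist_sub n j) hn]
      have hb : negLap T n + (V n - lam) * T n ≤ 0 := by
        rw [hlap, hTn]; exact ht_sub n hn
      have hφ : 0 ≤ ξ n ^ 2 * T n := mul_nonneg (sq_nonneg _) (hTn ▸ ht_nonneg n)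
      have : (ξ n ^ 2 * T n) * negLap T n + (V n - lam) * ξ n ^ 2 * T n ^ 2
          = (ξ n ^ 2 * T n) * (negLap T n + (V n - lam) * T n) := by ring
      rw [this]
      exact mul_nonpos_iff.mpr (Or.inl ⟨hφ, hb⟩)
    · have hTn : T n = 0 := hT_neg n hn
      simp [hTn]
  linarith [hfin]
end
end

section
/- Define x_k := log_k |n+δ_j| / log_k |n| for iterated logarithms. Then for k ≥ 1 the recurrence x_k = 1 + (log x_{k-1}) / log_k |n| holds, and with N_j := (2n_j + 1)/|n|², one has the asymptotic expansion x_k = 1 + N_j/(2 ℓ_1 … ℓ_k) - (N_j²/(4 ℓ_1 … ℓ_k)) (1 + (1/2) Σ_{r=1}^{k-1} 1/(ℓ_1 … ℓ_r)) + O(N_j³) as |n| → ∞, where ℓ_k := log_k |n|. -/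
open scoped BigOperators

noncomputable section

/-- Iterated logarithm: `itlog 0 x = x`, `itlog (k+1) x = log (itlog k x)`. -/
def itlog (k : ℕ) (x : ℝ) : ℝ := Real.log^[k] x

/-- `x_k = log_k|n+δ_j| / log_k|n|`. -/
def xq {d : ℕ} (j : Fin d) (k : ℕ) (n : Fin d → ℤ) : ℝ :=
  itlog k (znorm (n + Pi.single j 1)) / itlog k (znorm n)

/-- `N_j = (2n_j + 1)/|n|²`. -/
def Nq {d : ℕ} (j : Fin d) (n : Fin d → ℤ) : ℝ := (2 * (n j : ℝ) + 1) / znorm n ^ 2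

/-- Product `ℓ_1 ⋯ ℓ_k` of iterated logarithms of `|n|`. -/
def Pq {d : ℕ} (k : ℕ) (n : Fin d → ℤ) : ℝ := ∏ i ∈ Finset.Icc 1 k, itlog i (znorm n)

/-! ### Auxiliary lemmas -/

open scoped Topology
open Filter Asymptotics

lemma itlog_succ (k : ℕ) (x : ℝ) : itlog (k+1) x = Real.log (itlog k x) :=
  Function.iterate_succ_apply' _ _ _

lemma tendsto_itlog (k : ℕ) : Filter.Tendsto (itlog k) Filter.atTop Filter.atTop := by
  induction k with
  | zero => exact Filter.tendsto_id
  | succ k ih =>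
      have : itlog (k+1) = Real.log ∘ itlog k := by
        funext x; exact itlog_succ k x
      rw [this]
      exact Real.tendsto_log_atTop.comp ih

lemma znorm_sq {d : ℕ} (v : Fin d → ℤ) : znorm v ^ 2 = ∑ j, ((v j : ℝ))^2 :=
  Real.sq_sqrt (Finset.sum_nonneg fun _ _ => sq_nonneg _)

lemma abs_coord_le {d : ℕ} (v : Fin d → ℤ) (i : Fin d) : |(v i : ℝ)| ≤ znorm v := by
  have h1 : ((v i : ℝ))^2 ≤ ∑ j, ((v j : ℝ))^2 :=
    Finset.single_le_sum (f := fun j => ((v j : ℝ))^2) (fun _ _ => sq_nonneg _)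
      (Finset.mem_univ i)
  have := Real.sqrt_le_sqrt h1
  rwa [Real.sqrt_sq_eq_abs] at this

lemma tendsto_znorm {d : ℕ} : Filter.Tendsto (znorm (d := d)) Filter.cofinite Filter.atTop := by
  rw [Filter.tendsto_atTop]
  intro b
  rw [Filter.eventually_cofinite]
  have hsub : {n : Fin d → ℤ | ¬ b ≤ znorm n} ⊆
      Set.pi Set.univ (fun _ => {m : ℤ | |(m:ℝ)| < b}) := by
    intro n hn i _
    exact lt_of_le_of_lt (abs_coord_le n i) (not_le.mp hn)
  refine Set.Finite.subset (Set.Finite.pi fun i => ?_) hsub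
  have : {m : ℤ | |(m:ℝ)| < b} ⊆ Set.Icc (-⌈b⌉) ⌈b⌉ := by
    intro m hm
    simp only [Set.mem_setOf_eq] at hm
    rw [abs_lt] at hm
    constructor
    · have : (-⌈b⌉ : ℝ) ≤ m := by
        have := Int.le_ceil b
        linarith [hm.1]
      exact_mod_cast this
    · have : (m:ℝ) ≤ ⌈b⌉ := by have := Int.le_ceil b; linarith [hm.2]
      exact_mod_cast this
  exact (Set.finite_Icc _ _).subset this

lemma tendsto_shift {d : ℕ} (j : Fin d) :
    Filter.Tendsto (fun n : Fin d → ℤ => n + Pi.single j 1) Filter.cofinite Filter.cofinite :=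
  (add_left_injective (Pi.single j 1)).tendsto_cofinite

lemma tendsto_L {d : ℕ} (k : ℕ) :
    Filter.Tendsto (fun n : Fin d → ℤ => itlog k (znorm n)) Filter.cofinite Filter.atTop :=
  (tendsto_itlog k).comp tendsto_znorm

lemma tendsto_L' {d : ℕ} (j : Fin d) (k : ℕ) :
    Filter.Tendsto (fun n : Fin d → ℤ => itlog k (znorm (n + Pi.single j 1)))
      Filter.cofinite Filter.atTop :=
  (tendsto_L k).comp (tendsto_shift j)

lemma znorm_shift_sq {d : ℕ} (j : Fin d) (n : Fin d → ℤ) :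
    znorm (n + Pi.single j 1) ^ 2 = znorm n ^ 2 + (2 * (n j : ℝ) + 1) := by
  rw [znorm_sq, znorm_sq]
  have : ∀ i : Fin d, (((n + Pi.single j 1 : Fin d → ℤ) i : ℤ) : ℝ)^2
      = (n i : ℝ)^2 + (if i = j then 2*(n j : ℝ)+1 else 0) := by
    intro i
    rw [Pi.add_apply, Pi.single_apply]
    by_cases h : i = j
    · subst h; simp; ring
    · simp [h]
  simp only [this, Finset.sum_add_distrib, Finset.sum_ite_eq' Finset.univ j, Finset.mem_univ,
    if_true]

lemma tendsto_Nq {d : ℕ} (j : Fin d) :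
    Filter.Tendsto (Nq j) Filter.cofinite (𝓝 0) := by
  have hb : ∀ᶠ n : Fin d → ℤ in Filter.cofinite, ‖Nq j n‖ ≤ 3 / znorm n := by
    filter_upwards [tendsto_znorm.eventually_ge_atTop 1] with n hn
    have h0 : (0:ℝ) < znorm n := lt_of_lt_of_le one_pos hn
    have h1 : |2*(n j:ℝ)+1| ≤ 3 * znorm n := by
      have := abs_coord_le n j
      calc |2*(n j:ℝ)+1| ≤ 2*|(n j:ℝ)| + 1 := by
            calc |2*(n j:ℝ)+1| ≤ |2*(n j:ℝ)| + |(1:ℝ)| := abs_add_le _ _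
            _ = 2*|(n j:ℝ)| + 1 := by rw [abs_mul]; norm_num
        _ ≤ 2*znorm n + znorm n := by nlinarith
        _ = 3 * znorm n := by ring
    rw [Real.norm_eq_abs, Nq, abs_div, abs_of_pos (by positivity : (0:ℝ) < znorm n ^2)]
    rw [div_le_div_iff₀ (by positivity) h0]
    calc |2*(n j:ℝ)+1| * znorm n ≤ 3 * znorm n * znorm n := by nlinarith [abs_nonneg (2*(n j:ℝ)+1)]
    _ = 3 * znorm n ^ 2 := by ring
  have h3 : Filter.Tendsto (fun n : Fin d → ℤ => 3 / znorm n) Filter.cofinite (𝓝 0) := by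
    have := (tendsto_inv_atTop_zero).comp (tendsto_znorm (d := d))
    have := this.const_mul (3:ℝ)
    simpa [Function.comp, div_eq_mul_inv] using this
  exact squeeze_zero_norm' hb h3

lemma Pq_succ {d : ℕ} (m : ℕ) (n : Fin d → ℤ) :
    Pq (m+1) n = Pq m n * itlog (m+1) (znorm n) := by
  rw [Pq, Pq, Finset.prod_Icc_succ_top (Nat.le_add_left 1 m)]

lemma tendsto_Pq {d : ℕ} (m : ℕ) (hm : 1 ≤ m) :
    Filter.Tendsto (Pq (d := d) m) Filter.cofinite Filter.atTop := by
  induction m, hm using Nat.le_induction with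
  | base =>
      have : Pq (d := d) 1 = fun n => itlog 1 (znorm n) := by
        funext n; rw [Pq]; simp
      rw [this]; exact tendsto_L 1
  | succ m hm ih =>
      have : Pq (d := d) (m+1) = fun n => Pq m n * itlog (m+1) (znorm n) := by
        funext n; exact Pq_succ m n
      rw [this]
      exact ih.atTop_mul_atTop₀ (tendsto_L (m+1))

lemma rec_eventually {d : ℕ} (j : Fin d) (m : ℕ) :
    ∀ᶠ n : Fin d → ℤ in Filter.cofinite,
      xq j (m+1) n = 1 + Real.log (xq j m n) / itlog (m+1) (znorm n) := by
  filter_upwards [(tendsto_L m).eventually_ge_atTop 2,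
    (tendsto_L' j m).eventually_ge_atTop 2,
    (tendsto_L (m+1)).eventually_ge_atTop 2] with n h1 h2 h3
  have hL : itlog m (znorm n) ≠ 0 := by linarith
  have hL1 : itlog (m+1) (znorm n) ≠ 0 := by linarith
  have hx : xq j m n > 0 := div_pos (by linarith) (by linarith)
  have key : itlog (m+1) (znorm (n + Pi.single j 1))
      = Real.log (xq j m n) + itlog (m+1) (znorm n) := by
    rw [itlog_succ, itlog_succ]
    have : itlog m (znorm (n + Pi.single j 1)) = xq j m n * itlog m (znorm n) := by
      rw [xq]; field_simp
    rw [this, Real.log_mul (ne_of_gt hx) hL]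
  rw [xq, key]
  field_simp
  ring

lemma log_xq0 {d : ℕ} (j : Fin d) :
    ∀ᶠ n : Fin d → ℤ in Filter.cofinite,
      Real.log (xq j 0 n) = Real.log (1 + Nq j n) / 2 := by
  filter_upwards [tendsto_znorm.eventually_ge_atTop 1,
    (tendsto_znorm.comp (tendsto_shift j)).eventually_ge_atTop 1] with n h1 h2
  have h2' : (1:ℝ) ≤ znorm (n + Pi.single j 1) := h2
  have h0 : (0:ℝ) < znorm n := by linarith
  have h0' : (0:ℝ) < znorm (n + Pi.single j 1) := by linarith
  have hx : xq j 0 n = znorm (n + Pi.single j 1) / znorm n := rfl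
  have hsq : (xq j 0 n)^2 = 1 + Nq j n := by
    rw [hx, div_pow, znorm_shift_sq, Nq]
    field_simp
  have hxpos : 0 < xq j 0 n := by rw [hx]; positivity
  have hlp : Real.log ((xq j 0 n)^2) = 2 * Real.log (xq j 0 n) := by
    rw [Real.log_pow]; push_cast; ring
  rw [hsq] at hlp
  linarith

lemma log_taylor2 (y : ℝ) (hy : |y| ≤ 1/2) :
    |Real.log (1+y) - y + y^2/2| ≤ 2 * |y|^3 := by
  have h1 : |(-y)| < 1 := by rw [abs_neg]; linarith [abs_nonneg y]
  have h := Real.abs_log_sub_add_sum_range_le h1 2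
  have hs : (∑ i ∈ Finset.range 2, (-y) ^ (i + 1) / (i + 1)) = -y + y^2/2 := by
    simp [Finset.sum_range_succ]; ring
  rw [hs, abs_neg] at h
  have e1 : 1 - -y = 1 + y := by ring
  rw [e1] at h
  have e2 : -y + y ^ 2 / 2 + Real.log (1 + y) = Real.log (1+y) - y + y^2/2 := by ring
  rw [e2] at h
  have hden : (1:ℝ)/2 ≤ 1 - |y| := by linarith
  have : |y| ^ (2+1) / (1 - |y|) ≤ |y|^3 / (1/2) := by
    apply div_le_div_of_nonneg_left (by positivity) (by norm_num) hden
  calc |Real.log (1+y) - y + y^2/2| ≤ |y| ^ (2+1) / (1 - |y|) := h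
    _ ≤ |y|^3 / (1/2) := this
    _ = 2 * |y|^3 := by ring

lemma step_aux {α : Type*} {l : Filter α} (N P Lg S X X' : α → ℝ)
    (hrec : ∀ᶠ n in l, X' n = 1 + Real.log (X n) / Lg n)
    (hLg : Tendsto Lg l atTop)
    (hP : Tendsto P l atTop)
    (hS : Tendsto S l (𝓝 1))
    (hN : Tendsto N l (𝓝 0))
    (ih : (fun n => X n - (1 + N n/(2*P n) - N n^2/(4*P n) * S n)) =O[l] fun n => N n^3) :
    (fun n => X' n - (1 + N n/(2*(P n * Lg n))
        - N n^2/(4*(P n * Lg n)) * (S n + (1/2) * (1/P n)))) =O[l] fun n => N n^3 := by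
  have hN3 : Tendsto (fun n => N n^3) l (𝓝 0) := by
    have := hN.pow 3; simpa using this
  have hinvP : Tendsto (fun n => (P n)⁻¹) l (𝓝 0) := tendsto_inv_atTop_zero.comp hP
  have hinvLg : Tendsto (fun n => (Lg n)⁻¹) l (𝓝 0) := tendsto_inv_atTop_zero.comp hLg
  -- a tendsto 0
  have ha0 : Tendsto (fun n => N n/(2*P n) - N n^2/(4*P n) * S n) l (𝓝 0) := by
    have t1 : Tendsto (fun n => N n/(2*P n)) l (𝓝 0) := by
      have := hN.mul (hinvP.const_mul (2:ℝ)⁻¹)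
      simp only [mul_zero, zero_mul] at this
      refine this.congr fun n => by field_simp
    have t2 : Tendsto (fun n => N n^2/(4*P n) * S n) l (𝓝 0) := by
      have := ((hN.pow 2).mul (hinvP.const_mul (4:ℝ)⁻¹)).mul hS
      simp only [mul_zero, zero_mul, mul_one] at this
      norm_num at this
      refine this.congr fun n => by field_simp
    simpa using t1.sub t2
  -- eps tendsto 0
  have heps0 : Tendsto (fun n => X n - 1) l (𝓝 0) := by
    have := (ih.trans_tendsto hN3).add ha0
    simp only [add_zero] at this
    refine this.congr fun n => by ring
  -- a =O N
  have haO : (fun n => N n/(2*P n) - N n^2/(4*P n) * S n) =O[l] fun n => N n := by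
    have hg : Tendsto (fun n => (2*P n)⁻¹ - N n * S n/(4*P n)) l (𝓝 0) := by
      have t1 : Tendsto (fun n => (2*P n)⁻¹) l (𝓝 0) := by
        have := hinvP.const_mul (2:ℝ)⁻¹
        simp only [mul_zero] at this
        refine this.congr fun n => by rw [mul_inv]
      have t2 : Tendsto (fun n => N n * S n/(4*P n)) l (𝓝 0) := by
        have := (hN.mul hS).mul (hinvP.const_mul (4:ℝ)⁻¹)
        simp only [zero_mul, mul_zero] at this
        refine this.congr fun n => by field_simp
      simpa using t1.sub t2
    have := (isBigO_refl N l).mul (hg.isBigO_one ℝ)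
    exact this.congr (fun n => by field_simp) fun n => mul_one _
  -- eps =O N
  have hN3N : (fun n => N n^3) =O[l] fun n => N n := by
    have := ((hN.mul hN).isBigO_one ℝ).mul (isBigO_refl N l)
    exact this.congr (fun n => by ring) fun n => one_mul _
  have hepsO : (fun n => X n - 1) =O[l] fun n => N n := by
    have := (ih.trans hN3N).add haO
    exact this.congr_left fun n => by ring
  -- T1
  have hepsSmall : ∀ᶠ n in l, |X n - 1| ≤ 1/2 := by
    have := Metric.tendsto_nhds.mp heps0 (1/2) (by norm_num)
    filter_upwards [this] with n hn
    rw [Real.dist_eq, sub_zero] at hn; linarith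
  have T1 : (fun n => Real.log (X n) - (X n - 1) + (X n - 1)^2/2) =O[l]
      fun n => N n^3 := by
    have h1 : (fun n => Real.log (X n) - (X n - 1) + (X n - 1)^2/2) =O[l]
        fun n => (X n - 1)^3 := by
      refine IsBigO.of_bound 2 ?_
      filter_upwards [hepsSmall] with n hn
      have key := log_taylor2 (X n - 1) hn
      have e1 : 1 + (X n - 1) = X n := by ring
      rw [e1] at key
      calc ‖Real.log (X n) - (X n - 1) + (X n - 1)^2/2‖ ≤ 2 * |X n - 1|^3 := key
        _ = 2 * ‖(X n - 1)^3‖ := by rw [Real.norm_eq_abs, abs_pow]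
    exact h1.trans (hepsO.pow 3)
  -- T3
  have T3 : (fun n => ((N n/(2*P n) - N n^2/(4*P n) * S n)^2 - (X n - 1)^2)/2) =O[l]
      fun n => N n^3 := by
    have hdiff : (fun n => (N n/(2*P n) - N n^2/(4*P n) * S n) - (X n - 1)) =O[l]
        fun n => N n^3 := ih.neg_left.congr_left fun n => by ring
    have hsum1 : (fun n => (N n/(2*P n) - N n^2/(4*P n) * S n) + (X n - 1)) =O[l]
        (fun _ => (1:ℝ)) := (ha0.add heps0).isBigO_one ℝ
    have := (hdiff.mul hsum1).const_mul_left (1/2 : ℝ)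
    exact this.congr (fun n => by ring) fun n => by simp
  -- D
  have TD : (fun n => N n^3 * S n/(8*P n^2) - N n^4 * S n^2/(32*P n^2)) =O[l]
      fun n => N n^3 := by
    have hq : Tendsto (fun n => S n/(8*P n^2) - N n * S n^2/(32*P n^2)) l (𝓝 0) := by
      have hinvP2 : Tendsto (fun n => ((P n)^2)⁻¹) l (𝓝 0) := by
        have := hinvP.mul hinvP
        simp only [mul_zero] at this
        refine this.congr fun n => by rw [← mul_inv]; ring_nf
      have t1 : Tendsto (fun n => S n/(8*P n^2)) l (𝓝 0) := by
        have := hS.mul (hinvP2.const_mul (8:ℝ)⁻¹)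
        simp only [mul_zero, one_mul] at this
        refine this.congr fun n => by field_simp
      have t2 : Tendsto (fun n => N n * S n^2/(32*P n^2)) l (𝓝 0) := by
        have := (hN.mul (hS.pow 2)).mul (hinvP2.const_mul (32:ℝ)⁻¹)
        simp only [zero_mul, mul_zero] at this
        refine this.congr fun n => by field_simp
      have h := t1.sub t2; norm_num at h; exact h
    have := (isBigO_refl (fun n => N n^3) l).mul (hq.isBigO_one ℝ)
    exact this.congr (fun n => by ring) fun n => mul_one _
  -- numerator
  have Znum : (fun n => Real.log (X n)
      - ((N n/(2*P n) - N n^2/(4*P n) * S n)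
        - (N n/(2*P n) - N n^2/(4*P n) * S n)^2/2)
      + (N n^3 * S n/(8*P n^2) - N n^4 * S n^2/(32*P n^2))) =O[l] fun n => N n^3 := by
    have := (T1.add ih).add (T3.add TD)
    exact this.congr_left fun n => by ring
  -- final
  have hfin := Znum.mul (hinvLg.isBigO_one ℝ)
  have hfin2 : (fun n => (Real.log (X n)
      - ((N n/(2*P n) - N n^2/(4*P n) * S n)
        - (N n/(2*P n) - N n^2/(4*P n) * S n)^2/2)
      + (N n^3 * S n/(8*P n^2) - N n^4 * S n^2/(32*P n^2))) * (Lg n)⁻¹) =O[l]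
      fun n => N n^3 := hfin.congr_right fun n => mul_one _
  refine Filter.EventuallyEq.trans_isBigO ?_ hfin2
  filter_upwards [hrec, hLg.eventually_ge_atTop 1, hP.eventually_ge_atTop 1] with n hr hL1 hP1
  have hLne : Lg n ≠ 0 := by linarith
  have hPne : P n ≠ 0 := by linarith
  rw [hr]
  field_simp
  ring

lemma expansion {d : ℕ} (j : Fin d) (k : ℕ) (hk : 1 ≤ k) :
    (fun n : Fin d → ℤ =>
        xq j k n - (1 + Nq j n / (2 * Pq k n)
          - Nq j n ^ 2 / (4 * Pq k n)
            * (1 + (1 / 2) * ∑ r ∈ Finset.Icc 1 (k - 1), 1 / Pq r n)))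
      =O[Filter.cofinite] (fun n : Fin d → ℤ => Nq j n ^ 3) := by
  induction k, hk using Nat.le_induction with
  | base =>
      have hNsmall : ∀ᶠ n : Fin d → ℤ in Filter.cofinite, |Nq j n| ≤ 1/2 := by
        have := Metric.tendsto_nhds.mp (tendsto_Nq j) (1/2) (by norm_num)
        filter_upwards [this] with n hn
        rw [Real.dist_eq, sub_zero] at hn; linarith
      have hT : (fun n : Fin d → ℤ => Real.log (1 + Nq j n) - Nq j n + Nq j n^2/2)
          =O[Filter.cofinite] fun n => Nq j n^3 := by
        refine IsBigO.of_bound 2 ?_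
        filter_upwards [hNsmall] with n hn
        calc ‖Real.log (1 + Nq j n) - Nq j n + Nq j n^2/2‖ ≤ 2 * |Nq j n|^3 :=
              log_taylor2 _ hn
          _ = 2 * ‖Nq j n^3‖ := by rw [Real.norm_eq_abs, abs_pow]
      have hinv : Tendsto (fun n : Fin d → ℤ => (2 * itlog 1 (znorm n))⁻¹)
          Filter.cofinite (𝓝 0) :=
        tendsto_inv_atTop_zero.comp ((tendsto_L 1).const_mul_atTop two_pos)
      have hO := (hT.mul (hinv.isBigO_one ℝ)).congr_right fun n => mul_one _
      refine Filter.EventuallyEq.trans_isBigO ?_ hO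
      filter_upwards [rec_eventually j 0, log_xq0 j, (tendsto_L 1).eventually_ge_atTop 1]
        with n hr hl h1
      have hP1 : Pq 1 n = itlog 1 (znorm n) := by
        rw [Pq]; rw [Finset.Icc_self, Finset.prod_singleton]
      have hs : Finset.Icc 1 (1-1) = (∅ : Finset ℕ) := by norm_num
      have hne : itlog 1 (znorm n) ≠ 0 := by linarith
      rw [hs, hr, hl, hP1]
      simp only [Finset.sum_empty]
      field_simp
      ring
  | succ m hm ih =>
      have hS : Tendsto (fun n : Fin d → ℤ =>
          1 + (1/2) * ∑ r ∈ Finset.Icc 1 (m-1), 1 / Pq r n) Filter.cofinite (𝓝 1) := by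
        have hsum0 : Tendsto (fun n : Fin d → ℤ => ∑ r ∈ Finset.Icc 1 (m-1), 1 / Pq r n)
            Filter.cofinite (𝓝 0) := by
          have h : Tendsto (fun n : Fin d → ℤ => ∑ r ∈ Finset.Icc 1 (m-1), 1 / Pq r n)
              Filter.cofinite (𝓝 (∑ _r ∈ Finset.Icc 1 (m-1), (0:ℝ))) := by
            refine tendsto_finset_sum _ fun r hr => ?_
            have hr1 : 1 ≤ r := (Finset.mem_Icc.mp hr).1
            have := tendsto_inv_atTop_zero.comp (tendsto_Pq (d := d) r hr1)
            refine this.congr fun n => ?_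
            simp [one_div]
          simpa using h
        have := hsum0.const_mul (1/2 : ℝ)
        have h2 := (tendsto_const_nhds (x := (1:ℝ))).add this
        simpa using h2
      have H := step_aux (Nq j) (Pq m) (fun n => itlog (m+1) (znorm n))
        (fun n : Fin d → ℤ => 1 + (1/2) * ∑ r ∈ Finset.Icc 1 (m-1), 1 / Pq r n)
        (xq j m) (xq j (m+1))
        (rec_eventually j m) (tendsto_L (m+1)) (tendsto_Pq m hm) hS (tendsto_Nq j)
        (ih.congr_left fun n => by ring)
      simp only [Nat.add_sub_cancel]
      refine H.congr_left fun n => ?_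
      have hm1 : m - 1 + 1 = m := Nat.succ_pred_eq_of_pos hm
      have hsum : ∑ r ∈ Finset.Icc 1 m, 1 / Pq r n
          = (∑ r ∈ Finset.Icc 1 (m-1), 1 / Pq r n) + 1 / Pq m n := by
        conv_lhs => rw [← hm1]
        rw [Finset.sum_Icc_succ_top (by omega : 1 ≤ m - 1 + 1)]
        rw [hm1]
      rw [Pq_succ, hsum]
      ring

/-- For `k ≥ 1`, the recurrence `x_k = 1 + (log x_{k-1})/log_k|n|` holds for `|n|`
large, together with the asymptotic expansion
`x_k = 1 + N_j/(2ℓ_1⋯ℓ_k) - (N_j²/(4ℓ_1⋯ℓ_k))(1 + ½ Σ_{r=1}^{k-1} 1/(ℓ_1⋯ℓ_r)) + O(N_j³)`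
as `|n| → ∞`. -/
theorem xq_recurrence_and_expansion {d : ℕ} (j : Fin d) (k : ℕ) (hk : 1 ≤ k) :
    (∀ᶠ n : Fin d → ℤ in Filter.cofinite,
      xq j k n = 1 + Real.log (xq j (k - 1) n) / itlog k (znorm n)) ∧
    (fun n : Fin d → ℤ =>
        xq j k n - (1 + Nq j n / (2 * Pq k n)
          - Nq j n ^ 2 / (4 * Pq k n)
            * (1 + (1 / 2) * ∑ r ∈ Finset.Icc 1 (k - 1), 1 / Pq r n)))
      =O[Filter.cofinite] (fun n : Fin d → ℤ => Nq j n ^ 3) := by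
  constructor
  · obtain ⟨p, rfl⟩ : ∃ p, k = p + 1 := ⟨k - 1, (Nat.succ_pred_eq_of_pos hk).symm⟩
    simpa only [Nat.add_sub_cancel] using rec_eventually j p
  · exact expansion j k hk
end
end
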